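/- The relation ≺* on triples (d, R, {d_{p,u}}_{p∈R, u∈ℕ}) is transitive. -/
import Mathlib


universe u

/-- A triple `(d, R, {d_{p,u}}_{p ∈ R, u ∈ ℕ})`: a derivation `d`, an index set `R`,
and a family of derivations indexed by `R × ℕ`.  Derivations are modelled abstractly
as the elements of a type `D` equipped with a transitive, well-founded "proper
subderivation" (proper subtree) relation `lt`. -/
structure TripleIdx (D : Type u) : Type (u + 1) where
  d : D
  R : Type u
  fam : R → ℕ → D

namespace TripleIdx

variable {D : Type u}

/-- The family extended over `R ∪ {⊤}` (with `⊤` encoded as `none`), where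
`d_{⊤,u} = d` for all `u`. -/
def famT (T : TripleIdx D) : Option T.R → ℕ → D
  | none => fun _ => T.d
  | some p => T.fam p

/-- `x` is a subderivation (subtree) of `y`: the reflexive closure of the proper
subderivation relation `lt`. -/
def SubD (lt : D → D → Prop) (x y : D) : Prop := lt x y ∨ x = y

/-- The relation `≺*` on triples: `(d', R', {d'_{p,u}}) ≺* (d, R, {d_{p,u}})` iff there
is a function `f : R' ∪ {⊤} → R ∪ {⊤}` such that each `d'_{p',u}` is a subderivation of
`d_{f(p'),u}`, and a **proper** subderivation whenever `f⁻¹(f(p'))` is not a singleton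
or `f(p') = ⊤`. -/
def PrecStar (lt : D → D → Prop) (T' T : TripleIdx D) : Prop :=
  ∃ f : Option T'.R → Option T.R,
    (∀ p' u, SubD lt (T'.famT p' u) (T.famT (f p') u)) ∧
    (∀ p', (f p' = none ∨ ¬ ∀ q', f q' = f p' → q' = p') →
      ∀ u, lt (T'.famT p' u) (T.famT (f p') u))

/-- The relation `≺*` on triples `(d, R, {d_{p,u}})` is transitive. -/
theorem precStar_trans (lt : D → D → Prop) (htrans : Transitive lt) :
    Transitive (PrecStar lt) := by
  rintro A B C ⟨f, hf, hf'⟩ ⟨g, hg, hg'⟩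
  have comp : ∀ {a b c : D}, lt a b → SubD lt b c → lt a c := by
    rintro a b c h (h2|rfl)
    · exact htrans h h2
    · exact h
  have comp2 : ∀ {a b c : D}, SubD lt a b → lt b c → lt a c := by
    rintro a b c (h|rfl) h2
    · exact htrans h h2
    · exact h2
  refine ⟨fun x => g (f x), ?_, ?_⟩
  · intro p' u
    rcases hf p' u with h | h
    · rcases hg (f p') u with h2 | h2
      · exact Or.inl (htrans h h2)
      · exact Or.inl (h2 ▸ h)
    · exact h ▸ hg (f p') u
  · intro p' hp u
    rcases hp with hnone | hns
    · by_cases hfp : f p' = none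
      · exact comp (hf' p' (Or.inl hfp) u) (hg _ u)
      · exact comp2 (hf p' u) (hg' (f p') (Or.inl hnone) u)
    · push_neg at hns
      obtain ⟨q', hq1, hq2⟩ := hns
      by_cases hfq : f q' = f p'
      · exact comp (hf' p' (Or.inr fun h => hq2 (h q' hfq)) u) (hg _ u)
      · exact comp2 (hf p' u) (hg' (f p') (Or.inr fun h => hfq (h (f q') hq1)) u)


end TripleIdx
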